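/- Let G be a finite p-group, d ≥ 1, with G^(d+1) ≠ 1 and |G^(d)/G^(d+1)| = p^{2^d+1}. Then G^(d)/[G^(d),G] is elementary abelian of rank at most 2, and N_{2^d+1} = G^(d) ∩ γ_{2^d+1}(G), where N_{2^d+1} = [G^(d), G]. -/

import Mathlib

namespace SmallDerived

variable {G : Type*} [Group G]

/-- The descending chain obtained from `A` by repeatedly commutating with `G`. -/
def cser (A : Subgroup G) : ℕ → Subgroup G
  | 0 => A
  | n + 1 => ⁅cser A n, ⊤⁆

@[simp] lemma cser_zero (A : Subgroup G) : cser A 0 = A := rfl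

lemma cser_succ (A : Subgroup G) (n : ℕ) : cser A (n + 1) = ⁅cser A n, ⊤⁆ := rfl

lemma cser_normal (A : Subgroup G) [hA : A.Normal] (n : ℕ) : (cser A n).Normal := by
  induction n with
  | zero => exact hA
  | succ n ih => exact @Subgroup.commutator_normal _ _ (cser A n) ⊤ ih inferInstance

lemma cser_succ_le (A : Subgroup G) [A.Normal] (n : ℕ) : cser A (n + 1) ≤ cser A n := by
  haveI := cser_normal A n
  exact Subgroup.commutator_le_left _ _

lemma cser_le_cser (A : Subgroup G) [A.Normal] {m n : ℕ} (h : m ≤ n) :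
    cser A n ≤ cser A m := by
  induction n with
  | zero => simp_all
  | succ n ih =>
    rcases Nat.eq_or_lt_of_le h with rfl | hlt
    · exact le_rfl
    · exact (cser_succ_le A n).trans (ih (Nat.lt_succ_iff.mp hlt))

lemma cser_le (A : Subgroup G) [A.Normal] (n : ℕ) : cser A n ≤ A :=
  cser_le_cser A (Nat.zero_le n)

lemma cser_top (n : ℕ) : cser (⊤ : Subgroup G) n = (⊤ : Subgroup G).lowerCentralSeries n := by
  induction n with
  | zero => rfl
  | succ n ih => rw [cser_succ, ih]; rfl

lemma cser_add (A : Subgroup G) (m n : ℕ) : cser A (m + n) = cser (cser A m) n := by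
  induction n with
  | zero => rfl
  | succ n ih => rw [← Nat.add_assoc, cser_succ, ih]; rfl

/-- Three subgroups lemma, subgroup form for normal subgroups. -/
lemma three_subgroups (A B C : Subgroup G) [A.Normal] [B.Normal] [C.Normal] :
    ⁅A, ⁅B, C⁆⁆ ≤ ⁅⁅A, B⁆, C⁆ ⊔ ⁅⁅A, C⁆, B⁆ := by
  set R := ⁅⁅A, B⁆, C⁆ ⊔ ⁅⁅A, C⁆, B⁆ with hR
  haveI : R.Normal := Subgroup.sup_normal _ _
  set π := QuotientGroup.mk' R with hπ
  rw [Subgroup.commutator_comm]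
  have h1 : (⁅⁅C, A⁆, B⁆).map π = ⊥ := by
    rw [Subgroup.map_eq_bot_iff, QuotientGroup.ker_mk']
    calc ⁅⁅C, A⁆, B⁆ = ⁅⁅A, C⁆, B⁆ := by rw [Subgroup.commutator_comm C A]
      _ ≤ R := le_sup_right
  have h2 : (⁅⁅A, B⁆, C⁆).map π = ⊥ := by
    rw [Subgroup.map_eq_bot_iff, QuotientGroup.ker_mk']
    exact le_sup_left
  have key : (⁅⁅B, C⁆, A⁆).map π = ⊥ := by
    rw [Subgroup.map_commutator, Subgroup.map_commutator]
    refine Subgroup.commutator_commutator_eq_bot_of_rotate ?_ ?_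
    · rw [← Subgroup.map_commutator, ← Subgroup.map_commutator]; exact h1
    · rw [← Subgroup.map_commutator, ← Subgroup.map_commutator]; exact h2
  rw [Subgroup.map_eq_bot_iff, QuotientGroup.ker_mk'] at key
  exact key

lemma cser_comm_lcs (A : Subgroup G) [A.Normal] :
    ∀ m k : ℕ, ⁅cser A k, (⊤ : Subgroup G).lowerCentralSeries m⁆ ≤ cser A (k + m + 1) := by
  intro m
  induction m with
  | zero =>
    intro k
    exact le_of_eq (cser_succ A k).symm
  | succ m ih =>
    intro k
    haveI := cser_normal A k
    haveI := cser_normal A (k + 1)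
    have hstep : (⊤ : Subgroup G).lowerCentralSeries (m + 1) = ⁅(⊤ : Subgroup G).lowerCentralSeries m, ⊤⁆ := rfl
    rw [hstep]
    have e1 : k + (m + 1) + 1 = k + m + 2 := by omega
    have e2 : k + 1 + m + 1 = k + m + 2 := by omega
    rw [e1]
    refine le_trans (three_subgroups _ _ _) (sup_le ?_ ?_)
    · calc ⁅⁅cser A k, (⊤ : Subgroup G).lowerCentralSeries m⁆, ⊤⁆
          ≤ ⁅cser A (k + m + 1), ⊤⁆ := Subgroup.commutator_mono (ih k) le_rfl
        _ = cser A (k + m + 2) := (cser_succ A (k + m + 1)).symm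
    · calc ⁅⁅cser A k, ⊤⁆, (⊤ : Subgroup G).lowerCentralSeries m⁆
          = ⁅cser A (k + 1), (⊤ : Subgroup G).lowerCentralSeries m⁆ := by rw [← cser_succ]
        _ ≤ cser A (k + 1 + m + 1) := ih (k + 1)
        _ = cser A (k + m + 2) := by rw [e2]

lemma lcs_comm_lcs (n m : ℕ) :
    ⁅(⊤ : Subgroup G).lowerCentralSeries n, (⊤ : Subgroup G).lowerCentralSeries m⁆ ≤ (⊤ : Subgroup G).lowerCentralSeries (n + m + 1) := by
  have h := cser_comm_lcs (⊤ : Subgroup G) m n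
  rwa [cser_top, cser_top] at h

lemma derived_le_lcs (n : ℕ) : derivedSeries G n ≤ (⊤ : Subgroup G).lowerCentralSeries (2 ^ n - 1) := by
  induction n with
  | zero => exact le_top
  | succ n ih =>
    have h1 : 1 ≤ 2 ^ n := Nat.one_le_two_pow
    calc derivedSeries G (n + 1) = ⁅derivedSeries G n, derivedSeries G n⁆ :=
          derivedSeries_succ G n
      _ ≤ ⁅(⊤ : Subgroup G).lowerCentralSeries (2 ^ n - 1), (⊤ : Subgroup G).lowerCentralSeries (2 ^ n - 1)⁆ :=
          Subgroup.commutator_mono ih ih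
      _ ≤ (⊤ : Subgroup G).lowerCentralSeries ((2 ^ n - 1) + (2 ^ n - 1) + 1) := lcs_comm_lcs _ _
      _ = (⊤ : Subgroup G).lowerCentralSeries (2 ^ (n + 1) - 1) := by
          congr 1
          have h2 : 2 ^ (n + 1) = 2 * 2 ^ n := by rw [pow_succ]; ring
          omega



open scoped Pointwise
open scoped commutatorElement

lemma eq_bot_of_commutator_top_eq {p : ℕ} [Fact p.Prime] [Finite G] (hG : IsPGroup p G)
    {A : Subgroup G} (h : ⁅A, (⊤ : Subgroup G)⁆ = A) : A = ⊥ := by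
  haveI : Group.IsNilpotent G := hG.isNilpotent
  obtain ⟨n, hn⟩ := nilpotent_iff_lowerCentralSeries.mp this
  have hle : ∀ m, A ≤ (⊤ : Subgroup G).lowerCentralSeries m := by
    intro m
    induction m with
    | zero => exact le_top
    | succ m ih =>
      calc A = ⁅A, ⊤⁆ := h.symm
        _ ≤ ⁅(⊤ : Subgroup G).lowerCentralSeries m, ⊤⁆ := Subgroup.commutator_mono ih le_rfl
        _ = (⊤ : Subgroup G).lowerCentralSeries (m + 1) := rfl
  exact le_bot_iff.mp (hn ▸ hle n)

lemma relindex_pow {p : ℕ} [Fact p.Prime] [Finite G] (hG : IsPGroup p G)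
    (N H : Subgroup G) : ∃ n : ℕ, N.relIndex H = p ^ n :=
  (hG.to_subgroup H).index (N.subgroupOf H)

lemma relindex_ne_zero [Finite G] (N H : Subgroup G) : N.relIndex H ≠ 0 :=
  Subgroup.index_ne_zero_of_finite

lemma relindex_ge_p {p : ℕ} [hp : Fact p.Prime] [Finite G] (hG : IsPGroup p G)
    {N K : Subgroup G} (h : ¬ K ≤ N) : p ≤ N.relIndex K := by
  obtain ⟨n, hn⟩ := relindex_pow hG N K
  rcases Nat.eq_zero_or_pos n with rfl | hpos
  · rw [pow_zero] at hn
    exact absurd (Subgroup.relIndex_eq_one.mp hn) h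
  · calc p = p ^ 1 := (pow_one p).symm
      _ ≤ p ^ n := Nat.pow_le_pow_right hp.out.one_le hpos
      _ = N.relIndex K := hn.symm

lemma cser_relindex {p : ℕ} [Fact p.Prime] [Finite G] (hG : IsPGroup p G)
    (A : Subgroup G) [A.Normal] (k : ℕ) (hbot : cser A k ≠ ⊥) :
    p ^ k ≤ (cser A k).relIndex A := by
  induction k with
  | zero =>
    rw [pow_zero]
    exact le_of_eq (Subgroup.relIndex_eq_one.mpr le_rfl).symm
  | succ k ih =>
    have hk : cser A k ≠ ⊥ := by
      intro h
      exact hbot (by rw [cser_succ, h, Subgroup.commutator_bot_left])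
    have h1 : p ≤ (cser A (k + 1)).relIndex (cser A k) := by
      refine relindex_ge_p hG ?_
      intro hle
      have heq : ⁅cser A k, (⊤ : Subgroup G)⁆ = cser A k :=
        le_antisymm ((cser_succ A k).symm.trans_le (cser_succ_le A k)) hle
      exact hk (eq_bot_of_commutator_top_eq hG heq)
    calc p ^ (k + 1) = p * p ^ k := by rw [pow_succ]; ring
      _ ≤ (cser A (k + 1)).relIndex (cser A k) * (cser A k).relIndex A :=
          Nat.mul_le_mul h1 (ih hk)
      _ = (cser A (k + 1)).relIndex A :=
          Subgroup.relIndex_mul_relIndex _ _ _ (cser_succ_le A k) (cser_le A k)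

lemma card_map_mk' [Finite G] (N H : Subgroup G) [N.Normal] :
    Nat.card (H.map (QuotientGroup.mk' N)) = N.relIndex H := by
  have h1 : H.map (QuotientGroup.mk' N) = ((QuotientGroup.mk' N).comp H.subtype).range := by
    rw [MonoidHom.range_comp, Subgroup.range_subtype]
  have h2 : ((QuotientGroup.mk' N).comp H.subtype).ker = N.subgroupOf H := by
    rw [← MonoidHom.comap_ker, QuotientGroup.ker_mk']
    rfl
  rw [h1, ← Nat.card_congr
    (QuotientGroup.quotientKerEquivRange ((QuotientGroup.mk' N).comp H.subtype)).toEquiv, h2]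
  exact (Subgroup.index_eq_card _).symm

lemma le_zpowers_sup [Finite G] (N H : Subgroup G) [N.Normal]
    (x : G) (hx : x ∈ H)
    (hdvd : N.relIndex H ∣ orderOf ((QuotientGroup.mk' N) x)) :
    H ≤ Subgroup.zpowers x ⊔ N := by
  set π := QuotientGroup.mk' N with hπdef
  have hcard : Nat.card (H.map π) = N.relIndex H := card_map_mk' N H
  have hz : Subgroup.zpowers (π x) ≤ H.map π :=
    Subgroup.zpowers_le.mpr (Subgroup.mem_map_of_mem π hx)
  have hoc : orderOf (π x) ∣ Nat.card (H.map π) := by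
    rw [← Nat.card_zpowers]
    exact Subgroup.card_dvd_of_le hz
  have hoeq : orderOf (π x) = Nat.card (H.map π) :=
    Nat.dvd_antisymm hoc (hcard ▸ hdvd)
  have hzeq : Subgroup.zpowers (π x) = H.map π :=
    Subgroup.eq_of_le_of_card_ge hz (by rw [Nat.card_zpowers, hoeq])
  intro h hh
  have hmem : π h ∈ Subgroup.zpowers (π x) := hzeq ▸ Subgroup.mem_map_of_mem π hh
  obtain ⟨k, hk⟩ := Subgroup.mem_zpowers_iff.mp hmem
  have h1 : ((x ^ k)⁻¹ * h : G) ∈ N := by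
    rw [← QuotientGroup.eq_one_iff ((x ^ k)⁻¹ * h)]
    show π ((x ^ k)⁻¹ * h) = 1
    rw [map_mul, map_inv, map_zpow, hk]
    exact inv_mul_cancel _
  have : h = x ^ k * ((x ^ k)⁻¹ * h) := by group
  rw [this]
  exact Subgroup.mul_mem _
    (Subgroup.mem_sup_left (Subgroup.zpow_mem _ (Subgroup.mem_zpowers x) k))
    (Subgroup.mem_sup_right h1)

lemma commutator_le_of_cyclic_cover (N H : Subgroup G) [N.Normal] [H.Normal]
    (hNH : N ≤ H) (x : G) (hx : x ∈ H) (hcov : H ≤ Subgroup.zpowers x ⊔ N) :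
    ⁅H, H⁆ ≤ ⁅N, H⁆ := by
  set W := ⁅N, H⁆ with hWdef
  haveI : W.Normal := Subgroup.commutator_normal N H
  set π := QuotientGroup.mk' W with hπdef
  have hcomm : ∀ a ∈ N, ∀ b ∈ H, Commute (π a) (π b) := by
    intro a ha b hb
    have hW : ⁅a, b⁆ ∈ W := Subgroup.commutator_mem_commutator ha hb
    have h1 : π ⁅a, b⁆ = 1 := by
      show ((⁅a, b⁆ : G) : G ⧸ W) = 1
      rw [QuotientGroup.eq_one_iff]
      exact hW
    rw [map_commutatorElement] at h1
    exact commutatorElement_eq_one_iff_commute.mp h1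
  have key : ∀ a ∈ H, ∀ b ∈ H, Commute (π a) (π b) := by
    intro a ha b hb
    have ha' : a ∈ (Subgroup.zpowers x : Set G) * (N : Set G) := by
      rw [← Subgroup.mul_normal (Subgroup.zpowers x) N]
      exact hcov ha
    have hb' : b ∈ (Subgroup.zpowers x : Set G) * (N : Set G) := by
      rw [← Subgroup.mul_normal (Subgroup.zpowers x) N]
      exact hcov hb
    obtain ⟨u, hu, n, hn, rfl⟩ := ha'
    obtain ⟨v, hv, m, hm, rfl⟩ := hb'
    obtain ⟨s, hs⟩ := Subgroup.mem_zpowers_iff.mp hu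
    obtain ⟨t, ht⟩ := Subgroup.mem_zpowers_iff.mp hv
    subst hs; subst ht
    have hxs : (x : G) ^ s ∈ H := Subgroup.zpow_mem H hx s
    have hxt : (x : G) ^ t ∈ H := Subgroup.zpow_mem H hx t
    have c1 : Commute (π (x ^ s)) (π (x ^ t)) := by
      rw [map_zpow, map_zpow]
      exact (Commute.refl (π x)).zpow_zpow s t
    have c2 : Commute (π n) (π (x ^ t)) := hcomm n hn _ hxt
    have c3 : Commute (π (x ^ s)) (π m) := (hcomm m hm _ hxs).symm
    have c4 : Commute (π n) (π m) := hcomm n hn m (hNH hm)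
    rw [map_mul, map_mul]
    exact (c1.mul_right c3).mul_left (c2.mul_right c4)
  have hbot : (⁅H, H⁆).map π = ⊥ := by
    rw [Subgroup.map_commutator, Subgroup.commutator_eq_bot_iff_le_centralizer]
    rintro _ ⟨a, ha, rfl⟩
    rw [Subgroup.mem_centralizer_iff]
    rintro _ ⟨b, hb, rfl⟩
    exact ((key a ha b hb).symm).eq
  have hfin := (Subgroup.map_eq_bot_iff (⁅H, H⁆)).mp hbot
  rwa [hπdef, QuotientGroup.ker_mk'] at hfin

end SmallDerived
theorem small_derived_quotient_structure
    {p : ℕ} [Fact p.Prime]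
    {G : Type*} [Group G] [Finite G] (hG : IsPGroup p G)
    (d : ℕ) (hd : 1 ≤ d)
    (hne : derivedSeries G (d + 1) ≠ ⊥)
    (hsmall : (derivedSeries G (d + 1)).relIndex (derivedSeries G d) = p ^ (2 ^ d + 1)) :
    ⁅derivedSeries G d, derivedSeries G d⁆ ≤ ⁅derivedSeries G d, (⊤ : Subgroup G)⁆ ∧
    (∀ x ∈ derivedSeries G d, x ^ p ∈ ⁅derivedSeries G d, (⊤ : Subgroup G)⁆) ∧
    (⁅derivedSeries G d, (⊤ : Subgroup G)⁆).relIndex (derivedSeries G d) ≤ p ^ 2 ∧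
    ⁅derivedSeries G d, (⊤ : Subgroup G)⁆ =
      derivedSeries G d ⊓ (⊤ : Subgroup G).lowerCentralSeries (2 ^ d) := by
  classical
  have hp1 : 1 < p := (Fact.out : p.Prime).one_lt
  set H : Subgroup G := derivedSeries G d with hHdef
  set K : Subgroup G := derivedSeries G (d + 1) with hKdef
  haveI hHn : H.Normal := derivedSeries_normal G d
  have hKcomm : K = ⁅H, H⁆ := derivedSeries_succ G d
  have hp2 : 1 ≤ 2 ^ d := Nat.one_le_two_pow
  have hHlcs : H ≤ (⊤ : Subgroup G).lowerCentralSeries (2 ^ d - 1) := SmallDerived.derived_le_lcs d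
  have hKH_le : K ≤ H := by
    rw [hKcomm]; exact Subgroup.commutator_le_left H H
  -- basic chain facts
  have hbotC : ∀ T, K ≤ SmallDerived.cser H T → SmallDerived.cser H T ≠ ⊥ := by
    intro T hKT hbot
    exact hne (le_bot_iff.mp (hbot ▸ hKT))
  have hCle : ∀ T, SmallDerived.cser H T ≤ H := fun T => SmallDerived.cser_le H T
  have hupper : ∀ T, K ≤ SmallDerived.cser H T →
      (SmallDerived.cser H T).relIndex H ≤ p ^ (2 ^ d + 1) := by
    intro T hKT
    have h1 := Subgroup.relIndex_mul_relIndex K (SmallDerived.cser H T) H hKT (hCle T)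
    rw [hsmall] at h1
    calc (SmallDerived.cser H T).relIndex H
        ≤ K.relIndex (SmallDerived.cser H T) * (SmallDerived.cser H T).relIndex H :=
          Nat.le_mul_of_pos_left _ (Nat.pos_of_ne_zero (SmallDerived.relindex_ne_zero _ _))
      _ = p ^ (2 ^ d + 1) := h1
  have hlower : ∀ j k, SmallDerived.cser H (j + k) ≠ ⊥ →
      p ^ k ≤ (SmallDerived.cser H (j + k)).relIndex (SmallDerived.cser H j) := by
    intro j k hb
    haveI := SmallDerived.cser_normal H j
    have h := SmallDerived.cser_relindex hG (SmallDerived.cser H j) k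
      (by rwa [← SmallDerived.cser_add])
    rwa [← SmallDerived.cser_add] at h
  have hlow2 : ∀ j k, SmallDerived.cser H (j + k) ≠ ⊥ →
      p ^ k * ((SmallDerived.cser H j).relIndex H) ≤
        (SmallDerived.cser H (j + k)).relIndex H := by
    intro j k hb
    calc p ^ k * ((SmallDerived.cser H j).relIndex H)
        ≤ (SmallDerived.cser H (j + k)).relIndex (SmallDerived.cser H j) *
            ((SmallDerived.cser H j).relIndex H) :=
          Nat.mul_le_mul_right _ (hlower j k hb)
      _ = (SmallDerived.cser H (j + k)).relIndex H :=
          Subgroup.relIndex_mul_relIndex _ _ _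
            (SmallDerived.cser_le_cser H (by omega)) (hCle j)
  -- K ≤ C (2^d)
  have hKC : K ≤ SmallDerived.cser H (2 ^ d) := by
    rw [hKcomm]
    calc ⁅H, H⁆ ≤ ⁅SmallDerived.cser H 0, (⊤ : Subgroup G).lowerCentralSeries (2 ^ d - 1)⁆ :=
          Subgroup.commutator_mono (le_of_eq rfl) hHlcs
      _ ≤ SmallDerived.cser H (0 + (2 ^ d - 1) + 1) := SmallDerived.cser_comm_lcs H _ 0
      _ = SmallDerived.cser H (2 ^ d) := by rw [show 0 + (2 ^ d - 1) + 1 = 2 ^ d by omega]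
  have hC1eq : SmallDerived.cser H 1 = ⁅H, (⊤ : Subgroup G)⁆ := rfl
  -- PART 3
  have part3 : (⁅H, (⊤ : Subgroup G)⁆).relIndex H ≤ p ^ 2 := by
    rw [← hC1eq]
    have hC2d_ne : SmallDerived.cser H (2 ^ d) ≠ ⊥ := hbotC _ hKC
    have hb : p ^ (2 ^ d - 1) ≤
        (SmallDerived.cser H (2 ^ d)).relIndex (SmallDerived.cser H 1) := by
      have h := hlower 1 (2 ^ d - 1)
        (by rw [show 1 + (2 ^ d - 1) = 2 ^ d by omega]; exact hC2d_ne)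
      rwa [show 1 + (2 ^ d - 1) = 2 ^ d by omega] at h
    have hsplit := Subgroup.relIndex_mul_relIndex (SmallDerived.cser H (2 ^ d))
      (SmallDerived.cser H 1) H (SmallDerived.cser_le_cser H hp2) (hCle 1)
    have hchain : p ^ (2 ^ d - 1) * ((SmallDerived.cser H 1).relIndex H) ≤ p ^ (2 ^ d + 1) := by
      calc p ^ (2 ^ d - 1) * ((SmallDerived.cser H 1).relIndex H)
          ≤ (SmallDerived.cser H (2 ^ d)).relIndex (SmallDerived.cser H 1) *
              ((SmallDerived.cser H 1).relIndex H) := Nat.mul_le_mul_right _ hb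
        _ = (SmallDerived.cser H (2 ^ d)).relIndex H := hsplit
        _ ≤ p ^ (2 ^ d + 1) := hupper _ hKC
    have hfin : p ^ (2 ^ d + 1) = p ^ (2 ^ d - 1) * p ^ 2 := by
      rw [← pow_add]; congr 1; omega
    rw [hfin] at hchain
    exact Nat.le_of_mul_le_mul_left hchain (Nat.pow_pos (by omega))
  -- PART 2
  have part2 : ∀ x ∈ H, x ^ p ∈ ⁅H, (⊤ : Subgroup G)⁆ := by
    intro x hx
    by_contra hxp
    have hNn : (⁅H, (⊤ : Subgroup G)⁆).Normal := Subgroup.commutator_normal H ⊤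
    have hNH : ⁅H, (⊤ : Subgroup G)⁆ ≤ H := Subgroup.commutator_le_left H ⊤
    set N : Subgroup G := ⁅H, (⊤ : Subgroup G)⁆ with hNdef
    haveI := hNn
    set π := QuotientGroup.mk' N with hπdef
    have hord_dvd : orderOf (π x) ∣ N.relIndex H := by
      rw [← SmallDerived.card_map_mk' N H, ← Nat.card_zpowers]
      exact Subgroup.card_dvd_of_le (Subgroup.zpowers_le.mpr (Subgroup.mem_map_of_mem π hx))
    have hxppow : (π x) ^ p ≠ 1 := by
      intro h
      apply hxp
      rw [← QuotientGroup.eq_one_iff (x ^ p)]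
      show π (x ^ p) = 1
      rw [map_pow]; exact h
    have hnotp : ¬ orderOf (π x) ∣ p := fun h => hxppow (orderOf_dvd_iff_pow_eq_one.mp h)
    obtain ⟨i, hi⟩ := SmallDerived.relindex_pow hG N H
    have hi2 : i ≤ 2 := by
      have h3 : p ^ i ≤ p ^ 2 := by
        rw [← hi]; exact part3
      exact (Nat.pow_le_pow_iff_right hp1).mp h3
    have hod : orderOf (π x) ∣ p ^ i := hi ▸ hord_dvd
    obtain ⟨j, hj_le, hj⟩ := (Nat.dvd_prime_pow (Fact.out : p.Prime)).mp hod
    have hj2 : j = 2 := by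
      by_contra hjne
      have hj1 : j ≤ 1 := by omega
      apply hnotp
      rw [hj]
      exact dvd_trans (pow_dvd_pow p hj1) (by rw [pow_one])
    have hi_eq : i = 2 := le_antisymm hi2 (by omega)
    have hdvd : N.relIndex H ∣ orderOf (π x) := by rw [hi, hi_eq, hj, hj2]
    have hcov : H ≤ Subgroup.zpowers x ⊔ N := SmallDerived.le_zpowers_sup N H x hx hdvd
    have hKN : ⁅H, H⁆ ≤ ⁅N, H⁆ :=
      SmallDerived.commutator_le_of_cyclic_cover N H hNH x hx hcov
    have hKC1 : K ≤ SmallDerived.cser H (2 ^ d + 1) := by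
      rw [hKcomm]
      refine hKN.trans ?_
      calc ⁅N, H⁆ = ⁅SmallDerived.cser H 1, H⁆ := by rw [hC1eq]
        _ ≤ ⁅SmallDerived.cser H 1, (⊤ : Subgroup G).lowerCentralSeries (2 ^ d - 1)⁆ :=
            Subgroup.commutator_mono le_rfl hHlcs
        _ ≤ SmallDerived.cser H (1 + (2 ^ d - 1) + 1) := SmallDerived.cser_comm_lcs H _ 1
        _ = SmallDerived.cser H (2 ^ d + 1) := by
            rw [show 1 + (2 ^ d - 1) + 1 = 2 ^ d + 1 by omega]
    have hNval : (SmallDerived.cser H 1).relIndex H = p ^ 2 := by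
      rw [hC1eq, hi, hi_eq]
    have hlow := hlow2 1 (2 ^ d)
      (by rw [show 1 + 2 ^ d = 2 ^ d + 1 by omega]; exact hbotC _ hKC1)
    rw [show 1 + 2 ^ d = 2 ^ d + 1 by omega, hNval] at hlow
    have hfinal : p ^ (2 ^ d + 2) ≤ p ^ (2 ^ d + 1) := by
      calc p ^ (2 ^ d + 2) = p ^ (2 ^ d) * p ^ 2 := by rw [← pow_add]
        _ ≤ (SmallDerived.cser H (2 ^ d + 1)).relIndex H := hlow
        _ ≤ p ^ (2 ^ d + 1) := hupper _ hKC1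
    have := (Nat.pow_le_pow_iff_right hp1).mp hfinal
    omega
  -- PART 4, ≤ direction
  have hNleM : ⁅H, (⊤ : Subgroup G)⁆ ≤ H ⊓ (⊤ : Subgroup G).lowerCentralSeries (2 ^ d) := by
    refine le_inf (Subgroup.commutator_le_left H ⊤) ?_
    calc ⁅H, (⊤ : Subgroup G)⁆ ≤ ⁅(⊤ : Subgroup G).lowerCentralSeries (2 ^ d - 1), ⊤⁆ :=
        Subgroup.commutator_mono hHlcs le_rfl
      _ = (⊤ : Subgroup G).lowerCentralSeries ((2 ^ d - 1) + 1) := rfl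
      _ = (⊤ : Subgroup G).lowerCentralSeries (2 ^ d) := by rw [show (2 ^ d - 1) + 1 = 2 ^ d by omega]
  -- PART 4, ≥ direction
  have hMleN : H ⊓ (⊤ : Subgroup G).lowerCentralSeries (2 ^ d) ≤ ⁅H, (⊤ : Subgroup G)⁆ := by
    by_contra hMN
    set M : Subgroup G := H ⊓ (⊤ : Subgroup G).lowerCentralSeries (2 ^ d) with hMdef
    haveI hMn : M.Normal := by
      constructor
      intro m hm g
      have hm' : m ∈ H ⊓ (⊤ : Subgroup G).lowerCentralSeries (2 ^ d) := hm
      rw [Subgroup.mem_inf] at hm'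
      have : g * m * g⁻¹ ∈ H ⊓ (⊤ : Subgroup G).lowerCentralSeries (2 ^ d) :=
        Subgroup.mem_inf.mpr ⟨hHn.conj_mem m hm'.1 g,
          (Subgroup.lowerCentralSeries_normal ⊤ (2 ^ d)).conj_mem m hm'.2 g⟩
      exact this
    have hMH : M ≤ H := inf_le_left
    have hN1M : SmallDerived.cser H 1 ≤ M := by rw [hC1eq]; exact hNleM
    have haNM : p ≤ (SmallDerived.cser H 1).relIndex M := by
      refine SmallDerived.relindex_ge_p hG ?_
      rw [hC1eq]
      exact hMN
    have hsplitNM := Subgroup.relIndex_mul_relIndex (SmallDerived.cser H 1) M H hN1M hMH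
    obtain ⟨i, hiM⟩ := SmallDerived.relindex_pow hG M H
    have hN1H_le : (SmallDerived.cser H 1).relIndex H ≤ p ^ 2 := by
      rw [hC1eq]; exact part3
    have hMH_le : M.relIndex H ≤ p := by
      by_contra hgt
      push_neg at hgt
      have h3 : p * M.relIndex H ≤ p * p := by
        calc p * M.relIndex H
            ≤ (SmallDerived.cser H 1).relIndex M * M.relIndex H :=
              Nat.mul_le_mul_right _ haNM
          _ = (SmallDerived.cser H 1).relIndex H := hsplitNM
          _ ≤ p ^ 2 := hN1H_le
          _ = p * p := by ring
      have h4 : p * (p + 1) ≤ p * p := by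
        calc p * (p + 1) ≤ p * M.relIndex H := Nat.mul_le_mul_left p hgt
          _ ≤ p * p := h3
      have := Nat.le_of_mul_le_mul_left h4 (by omega : 0 < p)
      omega
    -- aN ≠ 1
    have hN1ne : ¬ H ≤ SmallDerived.cser H 1 := by
      intro hle
      have heq : ⁅H, (⊤ : Subgroup G)⁆ = H :=
        le_antisymm (Subgroup.commutator_le_left H ⊤) (by rw [← hC1eq]; exact hle)
      have hHbot : H = ⊥ := SmallDerived.eq_bot_of_commutator_top_eq hG heq
      exact hne (le_bot_iff.mp (hHbot ▸ hKH_le))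
    by_cases hM1 : M.relIndex H = 1
    · -- CASE (i) : H ≤ (⊤ : Subgroup G).lowerCentralSeries (2^d)
      have hHM : H ≤ (⊤ : Subgroup G).lowerCentralSeries (2 ^ d) :=
        (Subgroup.relIndex_eq_one.mp hM1).trans inf_le_right
      have hKC1 : K ≤ SmallDerived.cser H (2 ^ d + 1) := by
        rw [hKcomm]
        calc ⁅H, H⁆ ≤ ⁅SmallDerived.cser H 0, (⊤ : Subgroup G).lowerCentralSeries (2 ^ d)⁆ :=
              Subgroup.commutator_mono (le_of_eq rfl) hHM
          _ ≤ SmallDerived.cser H (0 + 2 ^ d + 1) := SmallDerived.cser_comm_lcs H _ 0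
          _ = SmallDerived.cser H (2 ^ d + 1) := by rw [show 0 + 2 ^ d + 1 = 2 ^ d + 1 by omega]
      obtain ⟨ia, hia⟩ := SmallDerived.relindex_pow hG (SmallDerived.cser H 1) H
      have hia1 : 1 ≤ ia := by
        rcases Nat.eq_zero_or_pos ia with rfl | h
        · rw [pow_zero] at hia
          exact absurd (Subgroup.relIndex_eq_one.mp hia) hN1ne
        · exact h
      by_cases hia2 : 2 ≤ ia
      · -- first step at least p^2 : contradiction with the chain of length 2^d
        have haN2 : p ^ 2 ≤ (SmallDerived.cser H 1).relIndex H := by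
          rw [hia]
          exact Nat.pow_le_pow_right (by omega) hia2
        have hlow := hlow2 1 (2 ^ d)
          (by rw [show 1 + 2 ^ d = 2 ^ d + 1 by omega]; exact hbotC _ hKC1)
        rw [show 1 + 2 ^ d = 2 ^ d + 1 by omega] at hlow
        have hfinal : p ^ (2 ^ d + 2) ≤ p ^ (2 ^ d + 1) := by
          calc p ^ (2 ^ d + 2) = p ^ (2 ^ d) * p ^ 2 := by rw [← pow_add]
            _ ≤ p ^ (2 ^ d) * ((SmallDerived.cser H 1).relIndex H) :=
                Nat.mul_le_mul_left _ haN2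
            _ ≤ (SmallDerived.cser H (2 ^ d + 1)).relIndex H := hlow
            _ ≤ p ^ (2 ^ d + 1) := hupper _ hKC1
        have := (Nat.pow_le_pow_iff_right hp1).mp hfinal
        omega
      · -- first step is exactly p ; use a cyclic generator
        have hia_eq : ia = 1 := by omega
        have haN : (SmallDerived.cser H 1).relIndex H = p := by
          rw [hia, hia_eq, pow_one]
        obtain ⟨x, hx, hxN⟩ := SetLike.not_le_iff_exists.mp hN1ne
        haveI := SmallDerived.cser_normal H 1
        set π := QuotientGroup.mk' (SmallDerived.cser H 1) with hπdef
        have hord_dvd : orderOf (π x) ∣ p := by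
          rw [← haN, ← SmallDerived.card_map_mk' (SmallDerived.cser H 1) H,
            ← Nat.card_zpowers]
          exact Subgroup.card_dvd_of_le
            (Subgroup.zpowers_le.mpr (Subgroup.mem_map_of_mem π hx))
        have hord_ne : orderOf (π x) ≠ 1 := by
          rw [Ne, orderOf_eq_one_iff]
          intro h1
          apply hxN
          rw [← QuotientGroup.eq_one_iff x]
          exact h1
        have hord_eq : orderOf (π x) = p :=
          ((Nat.Prime.eq_one_or_self_of_dvd (Fact.out : p.Prime) _ hord_dvd).resolve_left
            hord_ne)
        have hdvd : (SmallDerived.cser H 1).relIndex H ∣ orderOf (π x) := by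
          rw [haN, hord_eq]
        have hcov : H ≤ Subgroup.zpowers x ⊔ SmallDerived.cser H 1 :=
          SmallDerived.le_zpowers_sup _ H x hx hdvd
        have hKN : ⁅H, H⁆ ≤ ⁅SmallDerived.cser H 1, H⁆ :=
          SmallDerived.commutator_le_of_cyclic_cover _ H
            (by rw [hC1eq]; exact Subgroup.commutator_le_left H ⊤) x hx hcov
        have hKC2 : K ≤ SmallDerived.cser H (2 ^ d + 2) := by
          rw [hKcomm]
          refine hKN.trans ?_
          calc ⁅SmallDerived.cser H 1, H⁆
              ≤ ⁅SmallDerived.cser H 1, (⊤ : Subgroup G).lowerCentralSeries (2 ^ d)⁆ :=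
                Subgroup.commutator_mono le_rfl hHM
            _ ≤ SmallDerived.cser H (1 + 2 ^ d + 1) := SmallDerived.cser_comm_lcs H _ 1
            _ = SmallDerived.cser H (2 ^ d + 2) := by
                rw [show 1 + 2 ^ d + 1 = 2 ^ d + 2 by omega]
        have hlow := hlow2 1 (2 ^ d + 1)
          (by rw [show 1 + (2 ^ d + 1) = 2 ^ d + 2 by omega]; exact hbotC _ hKC2)
        rw [show 1 + (2 ^ d + 1) = 2 ^ d + 2 by omega, haN] at hlow
        have hfinal : p ^ (2 ^ d + 2) ≤ p ^ (2 ^ d + 1) := by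
          calc p ^ (2 ^ d + 2) = p ^ (2 ^ d + 1) * p := by rw [← pow_succ]
            _ ≤ (SmallDerived.cser H (2 ^ d + 2)).relIndex H := hlow
            _ ≤ p ^ (2 ^ d + 1) := hupper _ hKC2
        have := (Nat.pow_le_pow_iff_right hp1).mp hfinal
        omega
    · -- CASE (ii) : M has index exactly p in H
      have hMp : M.relIndex H = p := by
        rcases Nat.eq_zero_or_pos i with rfl | hipos
        · rw [pow_zero] at hiM; exact absurd hiM hM1
        · have : p ^ i ≤ p ^ 1 := by rw [pow_one, ← hiM]; exact hMH_le
          have hile : i ≤ 1 := (Nat.pow_le_pow_iff_right hp1).mp this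
          have : i = 1 := by omega
          rw [hiM, this, pow_one]
      have hHMne : ¬ H ≤ M := by
        intro hle
        exact hM1 (Subgroup.relIndex_eq_one.mpr hle)
      obtain ⟨x, hx, hxM⟩ := SetLike.not_le_iff_exists.mp hHMne
      set π := QuotientGroup.mk' M with hπdef
      have hord_dvd : orderOf (π x) ∣ p := by
        rw [← hMp, ← SmallDerived.card_map_mk' M H, ← Nat.card_zpowers]
        exact Subgroup.card_dvd_of_le
          (Subgroup.zpowers_le.mpr (Subgroup.mem_map_of_mem π hx))
      have hord_ne : orderOf (π x) ≠ 1 := by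
        rw [Ne, orderOf_eq_one_iff]
        intro h1
        apply hxM
        rw [← QuotientGroup.eq_one_iff x]
        exact h1
      have hord_eq : orderOf (π x) = p :=
        ((Nat.Prime.eq_one_or_self_of_dvd (Fact.out : p.Prime) _ hord_dvd).resolve_left
          hord_ne)
      have hdvd : M.relIndex H ∣ orderOf (π x) := by rw [hMp, hord_eq]
      have hcov : H ≤ Subgroup.zpowers x ⊔ M := SmallDerived.le_zpowers_sup M H x hx hdvd
      have hKM : ⁅H, H⁆ ≤ ⁅M, H⁆ :=
        SmallDerived.commutator_le_of_cyclic_cover M H hMH x hx hcov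
      have hKC1 : K ≤ SmallDerived.cser H (2 ^ d + 1) := by
        rw [hKcomm]
        refine hKM.trans ?_
        calc ⁅M, H⁆ = ⁅H, M⁆ := Subgroup.commutator_comm M H
          _ ≤ ⁅SmallDerived.cser H 0, (⊤ : Subgroup G).lowerCentralSeries (2 ^ d)⁆ :=
              Subgroup.commutator_mono (le_of_eq rfl) inf_le_right
          _ ≤ SmallDerived.cser H (0 + 2 ^ d + 1) := SmallDerived.cser_comm_lcs H _ 0
          _ = SmallDerived.cser H (2 ^ d + 1) := by rw [show 0 + 2 ^ d + 1 = 2 ^ d + 1 by omega]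
      have haN2 : p ^ 2 ≤ (SmallDerived.cser H 1).relIndex H := by
        calc p ^ 2 = p * p := by ring
          _ ≤ (SmallDerived.cser H 1).relIndex M * M.relIndex H :=
            Nat.mul_le_mul haNM (le_of_eq hMp.symm)
          _ = (SmallDerived.cser H 1).relIndex H := hsplitNM
      have hlow := hlow2 1 (2 ^ d)
        (by rw [show 1 + 2 ^ d = 2 ^ d + 1 by omega]; exact hbotC _ hKC1)
      rw [show 1 + 2 ^ d = 2 ^ d + 1 by omega] at hlow
      have hfinal : p ^ (2 ^ d + 2) ≤ p ^ (2 ^ d + 1) := by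
        calc p ^ (2 ^ d + 2) = p ^ (2 ^ d) * p ^ 2 := by rw [← pow_add]
          _ ≤ p ^ (2 ^ d) * ((SmallDerived.cser H 1).relIndex H) :=
              Nat.mul_le_mul_left _ haN2
          _ ≤ (SmallDerived.cser H (2 ^ d + 1)).relIndex H := hlow
          _ ≤ p ^ (2 ^ d + 1) := hupper _ hKC1
      have := (Nat.pow_le_pow_iff_right hp1).mp hfinal
      omega
  exact ⟨Subgroup.commutator_mono le_rfl le_top, part2, part3, le_antisymm hNleM hMleN⟩
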